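/- Let R and S be equivalence relations on ℕ. If the cardinality of the set of R-equivalence classes is at most the cardinality of the set of S-equivalence classes, then there is a function f : ℕ → ℕ computable relative to an oracle deciding both R and S (i.e., relative to the join {2·⟨x,y⟩ : x R y} ∪ {2·⟨x,y⟩+1 : x S y}) such that for all x, y: x R y ↔ f(x) S f(y). -/

import Mathlib

/-- `RecursiveIn O f` means the partial function `f` is partial recursive in the
(total) oracle `O`. -/
inductive ORecursiveIn (O : ℕ → ℕ) : (ℕ →. ℕ) → Prop
  | zero : ORecursiveIn O (pure 0)
  | succ : ORecursiveIn O Nat.succ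
  | left : ORecursiveIn O ↑fun n : ℕ => n.unpair.1
  | right : ORecursiveIn O ↑fun n : ℕ => n.unpair.2
  | oracle : ORecursiveIn O ↑O
  | pair {f g} : ORecursiveIn O f → ORecursiveIn O g →
      ORecursiveIn O fun n => Nat.pair <$> f n <*> g n
  | comp {f g} : ORecursiveIn O f → ORecursiveIn O g →
      ORecursiveIn O fun n => g n >>= f
  | prec {f g} : ORecursiveIn O f → ORecursiveIn O g →
      ORecursiveIn O (Nat.unpaired fun a n =>
        n.rec (f a) fun y IH => do let i ← IH; g (Nat.pair a (Nat.pair y i)))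
  | rfind {f} : ORecursiveIn O f →
      ORecursiveIn O fun a => Nat.rfind fun n => (fun m => m = 0) <$> f (Nat.pair a n)

/-- Turing reducibility between total functions on `ℕ`. -/
def OTuringReducible (f g : ℕ → ℕ) : Prop := ORecursiveIn g ↑f

/-- Turing equivalence of total functions on `ℕ`. -/
def OTuringEquivalent (f g : ℕ → ℕ) : Prop := OTuringReducible f g ∧ OTuringReducible g f

theorem OTuringReducible.refl (f : ℕ → ℕ) : OTuringReducible f f := ORecursiveIn.oracle

theorem ORecursiveIn.trans' {f : ℕ →. ℕ} {g h : ℕ → ℕ}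
    (hf : ORecursiveIn g f) (hg : OTuringReducible g h) : ORecursiveIn h f := by
  induction hf with
  | zero => exact .zero
  | succ => exact .succ
  | left => exact .left
  | right => exact .right
  | oracle => exact hg
  | pair _ _ ih₁ ih₂ => exact .pair ih₁ ih₂
  | comp _ _ ih₁ ih₂ => exact .comp ih₁ ih₂
  | prec _ _ ih₁ ih₂ => exact .prec ih₁ ih₂
  | rfind _ ih => exact .rfind ih

theorem OTuringReducible.trans {f g h : ℕ → ℕ}
    (h₁ : OTuringReducible f g) (h₂ : OTuringReducible g h) : OTuringReducible f h :=
  ORecursiveIn.trans' h₁ h₂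

/-- The setoid of Turing equivalence. -/
def turingSetoid : Setoid (ℕ → ℕ) :=
  ⟨OTuringEquivalent,
    fun f => ⟨.refl f, .refl f⟩,
    fun ⟨h₁, h₂⟩ => ⟨h₂, h₁⟩,
    fun ⟨a₁, a₂⟩ ⟨b₁, b₂⟩ => ⟨a₁.trans b₁, b₂.trans a₂⟩⟩

/-- Turing degrees. -/
def OTuringDegree : Type := Quotient turingSetoid

/-- The Turing degree of a total function. -/
def OTuringDegree.deg (f : ℕ → ℕ) : OTuringDegree := Quotient.mk turingSetoid f

instance : LE OTuringDegree :=
  ⟨fun d₁ d₂ =>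
    Quotient.liftOn₂ d₁ d₂ OTuringReducible
      (fun _ _ _ _ h h' =>
        propext ⟨fun hr => (h.2.trans hr).trans h'.1, fun hr => (h.1.trans hr).trans h'.2⟩)⟩

instance : LT OTuringDegree := ⟨fun d₁ d₂ => d₁ ≤ d₂ ∧ ¬d₂ ≤ d₁⟩

/-- The least Turing degree. -/
def OTuringDegree.zero : OTuringDegree := OTuringDegree.deg fun _ => 0

/-- A partial function is computable in a Turing degree if it is recursive in some
(equivalently, any) representative of that degree. -/
def OTuringDegree.ComputableIn (d : OTuringDegree) (f : ℕ →. ℕ) : Prop :=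
  Quotient.liftOn d (fun g => ORecursiveIn g f)
    (fun _ _ h => propext ⟨fun hr => hr.trans' h.1, fun hr => hr.trans' h.2⟩)

open Classical in
/-- The characteristic function of a set of naturals. -/
noncomputable def charFun (A : Set ℕ) : ℕ → ℕ := fun n => if n ∈ A then 1 else 0

/-- Turing reducibility between sets of naturals. -/
noncomputable def SetTuringReducible (A B : Set ℕ) : Prop :=
  OTuringReducible (charFun A) (charFun B)

/-- The Turing degree of a set of naturals. -/
noncomputable def OTuringDegree.degSet (A : Set ℕ) : OTuringDegree :=
  OTuringDegree.deg (charFun A)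

/-- `R` is `d`-computably reducible to `S`. -/
def ReducibleIn (d : OTuringDegree) (R S : ℕ → ℕ → Prop) : Prop :=
  ∃ f : ℕ → ℕ, d.ComputableIn ↑f ∧ ∀ x y, R x y ↔ S (f x) (f y)

/-- The reducibility spectrum of the pair `(R, S)`. -/
def SpecRed (R S : ℕ → ℕ → Prop) : Set OTuringDegree := {d | ReducibleIn d R S}

/-- The bi-reducibility spectrum of the pair `(R, S)`. -/
def SpecBired (R S : ℕ → ℕ → Prop) : Set OTuringDegree :=
  {d | ReducibleIn d R S ∧ ReducibleIn d S R}

/-- The equivalence relation generated by a set `A`: two numbers are equivalent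
iff they are equal or both belong to `A`. -/
def genRel (A : Set ℕ) : ℕ → ℕ → Prop := fun x y => x = y ∨ (x ∈ A ∧ y ∈ A)

/-- A ceer: an equivalence relation whose set of pairs is computably enumerable. -/
def Ceer (R : ℕ → ℕ → Prop) : Prop :=
  Equivalence R ∧ REPred fun p : ℕ × ℕ => R p.1 p.2

/-- A computably enumerable set of naturals. -/
def CePred (A : Set ℕ) : Prop := REPred (· ∈ A)

/-- A partial transversal of `R`: a set any two distinct elements of which are
`R`-inequivalent. -/
def PartialTransversal (R : ℕ → ℕ → Prop) (A : Set ℕ) : Prop :=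
  ∀ x ∈ A, ∀ y ∈ A, x ≠ y → ¬R x y

/-- An introreducible set: an infinite set computable from each of its infinite subsets. -/
def Introreducible (B : Set ℕ) : Prop :=
  B.Infinite ∧ ∀ C : Set ℕ, C ⊆ B → C.Infinite → SetTuringReducible B C

theorem ORecursiveIn.of_partrec {O : ℕ → ℕ} {f : ℕ →. ℕ} (h : Nat.Partrec f) :
    ORecursiveIn O f := by
  induction h with
  | zero => exact .zero
  | succ => exact .succ
  | left => exact .left
  | right => exact .right
  | pair _ _ ih₁ ih₂ => exact .pair ih₁ ih₂
  | comp _ _ ih₁ ih₂ => exact .comp ih₁ ih₂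
  | prec _ _ ih₁ ih₂ => exact .prec ih₁ ih₂
  | rfind _ ih => exact .rfind ih

def RecIn (O : ℕ → ℕ) (f : ℕ → ℕ) : Prop := ORecursiveIn O ↑f

theorem RecIn.of_computable {O : ℕ → ℕ} {f : ℕ → ℕ} (h : Computable f) : RecIn O f :=
  ORecursiveIn.of_partrec (Partrec.nat_iff.1 h.partrec)

theorem RecIn.oracle {O : ℕ → ℕ} : RecIn O O := ORecursiveIn.oracle

theorem RecIn.comp {O f g : ℕ → ℕ} (hf : RecIn O f) (hg : RecIn O g) :
    RecIn O fun n => f (g n) := by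
  have := ORecursiveIn.comp (f := ↑f) (g := ↑g) hf hg
  have e : (fun n => (g : ℕ →. ℕ) n >>= (f : ℕ →. ℕ)) = ((fun n => f (g n) : ℕ → ℕ) : ℕ →. ℕ) := by
    funext n; simp [PFun.coe_val]; exact Part.bind_some (g n) (f : ℕ →. ℕ)
  rwa [e] at this

theorem RecIn.pairF {O f g : ℕ → ℕ} (hf : RecIn O f) (hg : RecIn O g) :
    RecIn O fun n => Nat.pair (f n) (g n) := by
  have := ORecursiveIn.pair (f := ↑f) (g := ↑g) hf hg
  have e : (fun n => Nat.pair <$> (f : ℕ →. ℕ) n <*> (g : ℕ →. ℕ) n)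
      = ((fun n => Nat.pair (f n) (g n) : ℕ → ℕ) : ℕ →. ℕ) := by
    funext n; simp [PFun.coe_val, Seq.seq]
  rwa [e] at this

theorem RecIn.comp₂ {O : ℕ → ℕ} {h : ℕ → ℕ → ℕ} {f g : ℕ → ℕ}
    (hh : Computable₂ h) (hf : RecIn O f) (hg : RecIn O g) :
    RecIn O fun n => h (f n) (g n) := by
  have h1 : Computable fun p : ℕ => h p.unpair.1 p.unpair.2 :=
    hh.comp (Computable.fst.comp Computable.unpair) (Computable.snd.comp Computable.unpair)
  have := RecIn.comp (RecIn.of_computable (O := O) h1) (hf.pairF hg)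
  simpa using this

def precF (f g : ℕ → ℕ) : ℕ → ℕ :=
  Nat.unpaired fun a n => n.rec (f a) fun y IH => g (Nat.pair a (Nat.pair y IH))

theorem rec_some (x : ℕ) (h : ℕ → ℕ → ℕ) : ∀ n : ℕ,
    (Nat.rec (Part.some x) (fun y IH => IH >>= fun i => Part.some (h y i)) n : Part ℕ)
      = Part.some (Nat.rec x (fun y IH => h y IH) n)
  | 0 => rfl
  | n + 1 => by
    rw [show (Nat.rec (Part.some x) (fun y IH => IH >>= fun i => Part.some (h y i)) (n+1) : Part ℕ)
        = (Nat.rec (Part.some x) (fun y IH => IH >>= fun i => Part.some (h y i)) n : Part ℕ)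
          >>= fun i => Part.some (h n i) from rfl, rec_some x h n]
    simp

theorem RecIn.precF {O f g : ℕ → ℕ} (hf : RecIn O f) (hg : RecIn O g) :
    RecIn O (precF f g) := by
  have := ORecursiveIn.prec (f := ↑f) (g := ↑g) hf hg
  have e : (Nat.unpaired fun a n =>
        n.rec ((f : ℕ →. ℕ) a) fun y IH => do let i ← IH; (g : ℕ →. ℕ) (Nat.pair a (Nat.pair y i)))
      = ((_root_.precF f g : ℕ → ℕ) : ℕ →. ℕ) := by
    funext p
    simp only [Nat.unpaired, _root_.precF, PFun.coe_val]
    exact rec_some _ _ _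
  rwa [e] at this

theorem RecIn.rfindF {O t : ℕ → ℕ} (ht : RecIn O t) (H : ∀ a, ∃ n, t (Nat.pair a n) = 0) :
    RecIn O fun a => Nat.find (H a) := by
  have := ORecursiveIn.rfind (f := ↑t) ht
  have e : (fun a => Nat.rfind fun n => (fun m => m = 0) <$> (t : ℕ →. ℕ) (Nat.pair a n))
      = ((fun a => Nat.find (H a) : ℕ → ℕ) : ℕ →. ℕ) := by
    funext a
    apply Part.eq_some_iff.2
    apply Nat.mem_rfind.2
    constructor
    · simp [PFun.coe_val, Nat.find_spec (H a)]
    · intro m hm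
      simp [PFun.coe_val]
      exact Nat.find_min (H a) hm
  rwa [e] at this

theorem precF_zero (f g : ℕ → ℕ) (a : ℕ) : precF f g (Nat.pair a 0) = f a := by
  simp [precF]

theorem precF_succ (f g : ℕ → ℕ) (a n : ℕ) :
    precF f g (Nat.pair a (n + 1)) = g (Nat.pair a (Nat.pair n (precF f g (Nat.pair a n)))) := by
  simp [precF]

-- Part 2: concrete construction, appended to lib1 content for testing
section Construction

variable (O : ℕ → ℕ)

/-- `PRf O (pair a n) = ∏_{k<n} (1 - O (2 * pair k a))`. -/
def PRf : ℕ → ℕ :=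
  precF (fun _ => 1)
    (fun q => q.unpair.2.unpair.2 * (1 - O (2 * Nat.pair q.unpair.2.unpair.1 q.unpair.1)))

/-- `PSf O (pair a n) = ∏_{k<n} (1 - O (2 * pair k a + 1))`. -/
def PSf : ℕ → ℕ :=
  precF (fun _ => 1)
    (fun q => q.unpair.2.unpair.2 * (1 - O (2 * Nat.pair q.unpair.2.unpair.1 q.unpair.1 + 1)))

def rMinQ : ℕ → ℕ := fun m => PRf O (Nat.pair m m)
def sMinQ : ℕ → ℕ := fun m => PSf O (Nat.pair m m)

/-- `SumRf O (pair x t) = ∑_{y<t} PRf O (pair x (y+1))`. -/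
def SumRf : ℕ → ℕ :=
  precF (fun _ => 0)
    (fun q => q.unpair.2.unpair.2 + PRf O (Nat.pair q.unpair.1 (q.unpair.2.unpair.1 + 1)))

def rminF : ℕ → ℕ := fun x => SumRf O (Nat.pair x x)

def cntF (c : ℕ → ℕ) : ℕ → ℕ := fun n =>
  precF (fun _ => 0) (fun q => q.unpair.2.unpair.2 + c q.unpair.2.unpair.1) (Nat.pair 0 n)

def rcount : ℕ → ℕ := cntF (rMinQ O)
def scount : ℕ → ℕ := cntF (sMinQ O)
def rindex : ℕ → ℕ := fun x => rcount O (rminF O x)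

def testF : ℕ → ℕ := fun p =>
  (1 - sMinQ O p.unpair.2) +
    ((scount O p.unpair.2 - rindex O p.unpair.1) + (rindex O p.unpair.1 - scount O p.unpair.2))

-- Computability
theorem recIn_PRf : RecIn O (PRf O) := by
  apply RecIn.precF (RecIn.of_computable (Computable.const 1))
  exact RecIn.comp₂ Primrec.nat_mul.to_comp
    (RecIn.of_computable
      ((Computable.snd.comp Computable.unpair).comp (Computable.snd.comp Computable.unpair)))
    (RecIn.comp₂ Primrec.nat_sub.to_comp
      (RecIn.of_computable (Computable.const 1))
      (RecIn.comp RecIn.oracle (RecIn.of_computable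
        (Primrec.to_comp (by
          have h1 : Primrec fun q : ℕ => Nat.pair q.unpair.2.unpair.1 q.unpair.1 :=
            Primrec₂.natPair.comp
              ((Primrec.fst.comp Primrec.unpair).comp (Primrec.snd.comp Primrec.unpair))
              (Primrec.fst.comp Primrec.unpair)
          exact Primrec.nat_mul.comp (Primrec.const 2) h1)))))

theorem recIn_PSf : RecIn O (PSf O) := by
  apply RecIn.precF (RecIn.of_computable (Computable.const 1))
  exact RecIn.comp₂ Primrec.nat_mul.to_comp
    (RecIn.of_computable
      ((Computable.snd.comp Computable.unpair).comp (Computable.snd.comp Computable.unpair)))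
    (RecIn.comp₂ Primrec.nat_sub.to_comp
      (RecIn.of_computable (Computable.const 1))
      (RecIn.comp RecIn.oracle (RecIn.of_computable
        (Primrec.to_comp (by
          have h1 : Primrec fun q : ℕ => Nat.pair q.unpair.2.unpair.1 q.unpair.1 :=
            Primrec₂.natPair.comp
              ((Primrec.fst.comp Primrec.unpair).comp (Primrec.snd.comp Primrec.unpair))
              (Primrec.fst.comp Primrec.unpair)
          exact Primrec.succ.comp (Primrec.nat_mul.comp (Primrec.const 2) h1))))))

theorem recIn_diag {f : ℕ → ℕ} (hf : RecIn O f) : RecIn O fun m => f (Nat.pair m m) :=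
  RecIn.comp hf (RecIn.of_computable
    (Primrec.to_comp (Primrec₂.natPair.comp Primrec.id Primrec.id)))

theorem recIn_rMinQ : RecIn O (rMinQ O) := recIn_diag O (recIn_PRf O)
theorem recIn_sMinQ : RecIn O (sMinQ O) := recIn_diag O (recIn_PSf O)

theorem recIn_SumRf : RecIn O (SumRf O) := by
  apply RecIn.precF (RecIn.of_computable (Computable.const 0))
  exact RecIn.comp₂ Primrec.nat_add.to_comp
    (RecIn.of_computable
      ((Computable.snd.comp Computable.unpair).comp (Computable.snd.comp Computable.unpair)))
    (RecIn.comp (recIn_PRf O) (RecIn.of_computable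
      (Primrec.to_comp
        (Primrec₂.natPair.comp (Primrec.fst.comp Primrec.unpair)
          (Primrec.succ.comp
            ((Primrec.fst.comp Primrec.unpair).comp (Primrec.snd.comp Primrec.unpair)))))))

theorem recIn_rminF : RecIn O (rminF O) := recIn_diag O (recIn_SumRf O)

set_option maxHeartbeats 1000000 in
theorem recIn_cntF {c : ℕ → ℕ} (hc : RecIn O c) : RecIn O (cntF c) := by
  unfold cntF
  exact RecIn.comp
    (RecIn.precF (RecIn.of_computable (Computable.const 0))
      (RecIn.comp₂ Primrec.nat_add.to_comp
        (RecIn.of_computable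
          ((Computable.snd.comp Computable.unpair).comp (Computable.snd.comp Computable.unpair)))
        (RecIn.comp hc (RecIn.of_computable
          ((Computable.fst.comp Computable.unpair).comp (Computable.snd.comp Computable.unpair))))))
    (RecIn.of_computable (Primrec.to_comp (Primrec₂.natPair.comp (Primrec.const 0) Primrec.id)))


theorem recIn_rcount : RecIn O (rcount O) := recIn_cntF O (recIn_rMinQ O)
theorem recIn_scount : RecIn O (scount O) := recIn_cntF O (recIn_sMinQ O)
set_option maxHeartbeats 1000000 in
theorem recIn_rindex : RecIn O (rindex O) := by
  unfold rindex
  exact RecIn.comp (recIn_rcount O) (recIn_rminF O)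

theorem recIn_testF : RecIn O (testF O) := by
  have hu2 : Computable fun p : ℕ => p.unpair.2 := Computable.snd.comp Computable.unpair
  have hu1 : Computable fun p : ℕ => p.unpair.1 := Computable.fst.comp Computable.unpair
  have hs : RecIn O fun p : ℕ => sMinQ O p.unpair.2 :=
    RecIn.comp (recIn_sMinQ O) (RecIn.of_computable hu2)
  have hsc : RecIn O fun p : ℕ => scount O p.unpair.2 :=
    RecIn.comp (recIn_scount O) (RecIn.of_computable hu2)
  have hri : RecIn O fun p : ℕ => rindex O p.unpair.1 :=
    RecIn.comp (recIn_rindex O) (RecIn.of_computable hu1)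
  exact RecIn.comp₂ Primrec.nat_add.to_comp
    (RecIn.comp₂ Primrec.nat_sub.to_comp (RecIn.of_computable (Computable.const 1)) hs)
    (RecIn.comp₂ Primrec.nat_add.to_comp
      (RecIn.comp₂ Primrec.nat_sub.to_comp hsc hri)
      (RecIn.comp₂ Primrec.nat_sub.to_comp hri hsc))

end Construction

-- Part 3: arithmetic lemmas
section Arith

theorem find_congr' {p q : ℕ → Prop} [DecidablePred p] [DecidablePred q]
    (h : ∀ n, p n ↔ q n) (hp : ∃ n, p n) (hq : ∃ n, q n) : Nat.find hp = Nat.find hq :=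
  le_antisymm (Nat.find_mono fun n => (h n).2) (Nat.find_mono fun n => (h n).1)

variable (O : ℕ → ℕ)

theorem Pf_eq {u : ℕ → ℕ} (hu : ∀ p, u p = 0 ∨ u p = 1) (a : ℕ) : ∀ n : ℕ,
    precF (fun _ => 1)
      (fun q => q.unpair.2.unpair.2 * (1 - u (Nat.pair q.unpair.2.unpair.1 q.unpair.1)))
      (Nat.pair a n) = if ∀ k < n, u (Nat.pair k a) = 0 then 1 else 0
  | 0 => by
    rw [precF_zero]
    simp
  | n + 1 => by
    rw [precF_succ, Pf_eq hu a n]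
    simp only [Nat.unpair_pair, Nat.forall_lt_succ_right]
    rcases hu (Nat.pair n a) with h | h <;>
      by_cases hc : ∀ k < n, u (Nat.pair k a) = 0 <;> simp [h, hc]

theorem PRf_eq (hO : ∀ n, O n = 0 ∨ O n = 1) (a n : ℕ) :
    PRf O (Nat.pair a n) = if ∀ k < n, O (2 * Nat.pair k a) = 0 then 1 else 0 :=
  Pf_eq (u := fun p => O (2 * p)) (fun p => hO (2 * p)) a n

theorem PSf_eq (hO : ∀ n, O n = 0 ∨ O n = 1) (a n : ℕ) :
    PSf O (Nat.pair a n) = if ∀ k < n, O (2 * Nat.pair k a + 1) = 0 then 1 else 0 :=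
  Pf_eq (u := fun p => O (2 * p + 1)) (fun p => hO (2 * p + 1)) a n

theorem SumRf_eq (hO : ∀ n, O n = 0 ∨ O n = 1) (x : ℕ) (hex : ∃ k, O (2 * Nat.pair k x) = 1) :
    ∀ t : ℕ, SumRf O (Nat.pair x t) = min (Nat.find hex) t
  | 0 => by rw [show SumRf O (Nat.pair x 0) = 0 from precF_zero _ _ _]; omega
  | t + 1 => by
    rw [show SumRf O (Nat.pair x (t + 1))
        = SumRf O (Nat.pair x t) + PRf O (Nat.pair x (t + 1)) by
      unfold SumRf; rw [precF_succ]; simp [Nat.unpair_pair]]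
    rw [SumRf_eq hO x hex t, PRf_eq O hO]
    by_cases hc : ∀ k < t + 1, O (2 * Nat.pair k x) = 0
    · have hgt : t < Nat.find hex := by
        rcases lt_or_ge t (Nat.find hex) with h | h
        · exact h
        · exact absurd (Nat.find_spec hex) (by
            have := hc (Nat.find hex) (Nat.lt_succ_of_le h); omega)
      rw [if_pos hc]
      omega
    · have hle : Nat.find hex ≤ t := by
        by_contra h
        push_neg at h
        exact hc fun k hk => by
          rcases hO (2 * Nat.pair k x) with h0 | h1
          · exact h0
          · exact absurd (Nat.find_min' hex h1) (by omega)
      rw [if_neg hc]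
      omega

theorem cntF_zero (c : ℕ → ℕ) : cntF c 0 = 0 := precF_zero _ _ _

theorem cntF_succ (c : ℕ → ℕ) (n : ℕ) : cntF c (n + 1) = cntF c n + c n := by
  unfold cntF; rw [precF_succ]; simp [Nat.unpair_pair]

theorem cntF_card (c : ℕ → ℕ) (hc : ∀ m, c m = 0 ∨ c m = 1) : ∀ n : ℕ,
    cntF c n = ((Finset.range n).filter (fun m => c m = 1)).card
  | 0 => by simp [cntF_zero]
  | n + 1 => by
    rw [cntF_succ, cntF_card c hc n, Finset.range_add_one, Finset.filter_insert]
    rcases hc n with h | h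
    · simp [h]
    · rw [if_pos h, h, Finset.card_insert_of_notMem (by simp)]

theorem cntF_lt (c : ℕ → ℕ) (hc : ∀ m, c m = 0 ∨ c m = 1) {m n : ℕ} (hmn : m < n)
    (hm : c m = 1) : cntF c m < cntF c n := by
  rw [cntF_card c hc, cntF_card c hc]
  apply Finset.card_lt_card
  rw [Finset.ssubset_iff_of_subset
    (Finset.filter_subset_filter _ (Finset.range_subset_range.2 (le_of_lt hmn)))]
  exact ⟨m, by simp [hmn, hm], by simp⟩

theorem cntF_le (c : ℕ → ℕ) (hc : ∀ m, c m = 0 ∨ c m = 1) {m n : ℕ} (hmn : m ≤ n) :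
    cntF c m ≤ cntF c n := by
  rw [cntF_card c hc, cntF_card c hc]
  exact Finset.card_le_card
    (Finset.filter_subset_filter _ (Finset.range_subset_range.2 hmn))

end Arith

-- Part 4: main theorem
set_option maxHeartbeats 1000000 in
theorem main_reduction (O : ℕ → ℕ) (R S : ℕ → ℕ → Prop) (hR : Equivalence R) (hS : Equivalence S)
    (hcard : Cardinal.mk (Quot R) ≤ Cardinal.mk (Quot S))
    (hO01 : ∀ n, O n = 0 ∨ O n = 1)
    (hOR : ∀ x y, O (2 * Nat.pair x y) = 1 ↔ R x y)
    (hOS : ∀ x y, O (2 * Nat.pair x y + 1) = 1 ↔ S x y) :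
    ∃ f : ℕ → ℕ, ORecursiveIn O ↑f ∧ ∀ x y, R x y ↔ S (f x) (f y) := by
  -- characterizations of the basic building blocks
  have hOR0 : ∀ x y, O (2 * Nat.pair x y) = 0 ↔ ¬R x y := by
    intro x y
    constructor
    · intro h0 hr; have := (hOR x y).2 hr; omega
    · intro hr
      rcases hO01 (2 * Nat.pair x y) with h | h
      · exact h
      · exact absurd ((hOR x y).1 h) hr
  have hOS0 : ∀ x y, O (2 * Nat.pair x y + 1) = 0 ↔ ¬S x y := by
    intro x y
    constructor
    · intro h0 hr; have := (hOS x y).2 hr; omega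
    · intro hr
      rcases hO01 (2 * Nat.pair x y + 1) with h | h
      · exact h
      · exact absurd ((hOS x y).1 h) hr
  have hrMinQ01 : ∀ m, rMinQ O m = 0 ∨ rMinQ O m = 1 := by
    intro m; unfold rMinQ; rw [PRf_eq O hO01]; split <;> simp
  have hsMinQ01 : ∀ m, sMinQ O m = 0 ∨ sMinQ O m = 1 := by
    intro m; unfold sMinQ; rw [PSf_eq O hO01]; split <;> simp
  have hrMinQ : ∀ m, rMinQ O m = 1 ↔ ∀ k < m, ¬R k m := by
    intro m; unfold rMinQ; rw [PRf_eq O hO01]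
    constructor
    · intro h k hk
      by_contra hc
      rw [if_neg (fun hall => (hOR0 k m).1 (hall k hk) hc)] at h
      simp at h
    · intro h
      rw [if_pos (fun k hk => (hOR0 k m).2 (h k hk))]
  have hsMinQ : ∀ m, sMinQ O m = 1 ↔ ∀ k < m, ¬S k m := by
    intro m; unfold sMinQ; rw [PSf_eq O hO01]
    constructor
    · intro h k hk
      by_contra hc
      rw [if_neg (fun hall => (hOS0 k m).1 (hall k hk) hc)] at h
      simp at h
    · intro h
      rw [if_pos (fun k hk => (hOS0 k m).2 (h k hk))]
  -- the least element of the R-class of x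
  have hex : ∀ x, ∃ k, O (2 * Nat.pair k x) = 1 := fun x => ⟨x, (hOR x x).2 (hR.refl x)⟩
  set rm : ℕ → ℕ := fun x => Nat.find (hex x) with hrm_def
  have hrm_spec : ∀ x, R (rm x) x := fun x => (hOR _ x).1 (Nat.find_spec (hex x))
  have hrm_min : ∀ x k, k < rm x → ¬R k x := fun x k hk hc =>
    Nat.find_min (hex x) hk ((hOR k x).2 hc)
  have hrm_eq : ∀ x, rminF O x = rm x := by
    intro x
    have hle : Nat.find (hex x) ≤ x := Nat.find_min' (hex x) ((hOR x x).2 (hR.refl x))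
    have h2 := SumRf_eq O hO01 x (hex x) x
    show SumRf O (Nat.pair x x) = Nat.find (hex x)
    rw [h2]
    omega
  have hrm_RMin : ∀ x k, k < rm x → ¬R k (rm x) := fun x k hk hc =>
    hrm_min x k hk (hR.trans hc (hrm_spec x))
  have hrm_congr : ∀ x y, R x y → rm x = rm y := by
    intro x y hxy
    apply le_antisymm
    · exact Nat.find_min' (hex x) ((hOR _ x).2 (hR.trans (hrm_spec y) (hR.symm hxy)))
    · exact Nat.find_min' (hex y) ((hOR _ y).2 (hR.trans (hrm_spec x) hxy))
  -- counting lemmas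
  have hrc_inj : ∀ m n, (∀ k < m, ¬R k m) → (∀ k < n, ¬R k n) → rcount O m = rcount O n →
      m = n := by
    intro m n hm hn hcnt
    rcases lt_trichotomy m n with h | h | h
    · exact absurd hcnt (Nat.ne_of_lt (cntF_lt _ hrMinQ01 h ((hrMinQ m).2 hm)))
    · exact h
    · exact absurd hcnt.symm (Nat.ne_of_lt (cntF_lt _ hrMinQ01 h ((hrMinQ n).2 hn)))
  have hri : ∀ x, rindex O x = rcount O (rm x) := by
    intro x; unfold rindex; rw [hrm_eq x]
  have hri_congr : ∀ x y, R x y → rindex O x = rindex O y := by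
    intro x y h; rw [hri, hri, hrm_congr x y h]
  have hri_inj : ∀ x y, rindex O x = rindex O y → R x y := by
    intro x y h
    rw [hri, hri] at h
    have := hrc_inj _ _ (hrm_RMin x) (hrm_RMin y) h
    exact hR.trans (hR.symm (hrm_spec x)) (this ▸ hrm_spec y)
  -- key existence: enough S-classes
  obtain ⟨e⟩ := (Cardinal.le_def (Quot R) (Quot S)).1 hcard
  have key : ∀ x, ∃ n, sMinQ O n = 1 ∧ scount O n = rindex O x := by
    intro x
    set k := rindex O x with hk
    -- a finset of k+1 R-minimal elements
    set F : Finset ℕ :=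
      insert (rm x) ((Finset.range (rm x)).filter (fun m => rMinQ O m = 1)) with hF
    have hFcard : F.card = k + 1 := by
      rw [hF, Finset.card_insert_of_notMem (by simp)]
      have : rcount O (rm x) = ((Finset.range (rm x)).filter (fun m => rMinQ O m = 1)).card :=
        cntF_card _ hrMinQ01 _
      rw [hk, hri, this]
    have hF_RMin : ∀ m ∈ F, ∀ j < m, ¬R j m := by
      intro m hm
      rw [hF, Finset.mem_insert] at hm
      rcases hm with h | h
      · exact h ▸ hrm_RMin x
      · exact (hrMinQ m).1 (Finset.mem_filter.1 h).2
    -- map R-minimal elements to S-minimal elements injectively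
    haveI : ∀ q : Quot S, DecidablePred (fun a => Quot.mk S a = q) :=
      fun q a => Classical.propDecidable _
    have hms : ∀ q : Quot S, ∃ a, Quot.mk S a = q := fun q => Quot.exists_rep q
    set ms : Quot S → ℕ := fun q => Nat.find (hms q) with hms_def
    have hms_spec : ∀ q, Quot.mk S (ms q) = q := fun q => Nat.find_spec (hms q)
    have hms_SMin : ∀ q, ∀ j < ms q, ¬S j (ms q) := by
      intro q j hj hc
      exact Nat.find_min (hms q) hj ((Quot.sound hc).trans (hms_spec q))
    set φ : ℕ → ℕ := fun m => ms (e (Quot.mk R m)) with hφ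
    have hφinj : ∀ m ∈ F, ∀ m' ∈ F, φ m = φ m' → m = m' := by
      intro m hm m' hm' heq
      have h1 : e (Quot.mk R m) = e (Quot.mk R m') := by
        rw [← hms_spec (e (Quot.mk R m)), ← hms_spec (e (Quot.mk R m')), hφ] at *
        exact congrArg _ heq
      have h2 : R m m' := (hR.eqvGen_iff).1 (Quot.eqvGen_exact (e.injective h1))
      rcases lt_trichotomy m m' with h | h | h
      · exact absurd h2 (hF_RMin m' hm' m h)
      · exact h
      · exact absurd (hR.symm h2) (hF_RMin m hm m' h)
    set G : Finset ℕ := F.image φ with hG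
    have hGcard : G.card = k + 1 := by
      rw [hG, Finset.card_image_of_injOn hφinj, hFcard]
    have hG_SMin : ∀ n ∈ G, sMinQ O n = 1 := by
      intro n hn
      rw [hG, Finset.mem_image] at hn
      obtain ⟨m, _, rfl⟩ := hn
      exact (hsMinQ _).2 (hms_SMin _)
    -- hence scount gets above k
    have hbig : ∃ t, k < scount O t := by
      refine ⟨G.sup id + 1, ?_⟩
      have hsub : G ⊆ (Finset.range (G.sup id + 1)).filter (fun m => sMinQ O m = 1) := by
        intro n hn
        exact Finset.mem_filter.2 ⟨Finset.mem_range.2 (Nat.lt_succ_of_le (Finset.le_sup (f := id) hn)),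
          hG_SMin n hn⟩
      have := Finset.card_le_card hsub
      rw [hGcard] at this
      have hceq : scount O (G.sup id + 1)
          = ((Finset.range (G.sup id + 1)).filter (fun m => sMinQ O m = 1)).card :=
        cntF_card _ hsMinQ01 _
      omega
    -- take the least t with scount t > k
    have ht0 : k < scount O (Nat.find hbig) := Nat.find_spec hbig
    have ht0ne : Nat.find hbig ≠ 0 := by
      intro h
      rw [h] at ht0
      have : scount O 0 = 0 := cntF_zero _
      omega
    obtain ⟨n, hn⟩ : ∃ n, Nat.find hbig = n + 1 := ⟨Nat.find hbig - 1, by omega⟩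
    have ht0' : k < scount O (n + 1) := hn ▸ ht0
    have hn_le : scount O n ≤ k := by
      have := Nat.find_min hbig (m := n) (by omega)
      omega
    have hsucc : scount O (n + 1) = scount O n + sMinQ O n := cntF_succ _ _
    rcases hsMinQ01 n with h | h
    · omega
    · exact ⟨n, h, by omega⟩
  -- the test and the reduction
  have htest : ∀ x n, testF O (Nat.pair x n) = 0 ↔
      sMinQ O n = 1 ∧ scount O n = rindex O x := by
    intro x n
    have he : testF O (Nat.pair x n) = (1 - sMinQ O n) +
        ((scount O n - rindex O x) + (rindex O x - scount O n)) := by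
      simp [testF]
    rw [he]
    rcases hsMinQ01 n with h | h <;> rw [h] <;> omega
  have H : ∀ x, ∃ n, testF O (Nat.pair x n) = 0 := by
    intro x
    obtain ⟨n, h1, h2⟩ := key x
    exact ⟨n, (htest x n).2 ⟨h1, h2⟩⟩
  refine ⟨fun x => Nat.find (H x), RecIn.rfindF (recIn_testF O) H, ?_⟩
  have hfspec : ∀ x, sMinQ O (Nat.find (H x)) = 1 ∧ scount O (Nat.find (H x)) = rindex O x :=
    fun x => (htest x _).1 (Nat.find_spec (H x))
  have hcongrf : ∀ x y, rindex O x = rindex O y → Nat.find (H x) = Nat.find (H y) := by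
    intro x y h
    exact find_congr' (fun n => by rw [htest, htest, h]) (H x) (H y)
  intro x y
  show R x y ↔ S (Nat.find (H x)) (Nat.find (H y))
  constructor
  · intro hxy
    rw [hcongrf x y (hri_congr x y hxy)]
    exact hS.refl _
  · intro hxy
    have h1 := hfspec x
    have h2 := hfspec y
    have heq : Nat.find (H x) = Nat.find (H y) := by
      rcases lt_trichotomy (Nat.find (H x)) (Nat.find (H y)) with h | h | h
      · exact absurd hxy ((hsMinQ _).1 h2.1 _ h)
      · exact h
      · exact absurd (hS.symm hxy) ((hsMinQ _).1 h1.1 _ h)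
    apply hri_inj
    rw [← h1.2, ← h2.2, heq]

/-- If `R` has at most as many classes as `S`, then there is a
reduction from `R` to `S` computable in the join of `R` and `S`. -/
theorem stmt_1 (R S : ℕ → ℕ → Prop) (hR : Equivalence R) (hS : Equivalence S)
    (hcard : Cardinal.mk (Quot R) ≤ Cardinal.mk (Quot S)) :
    ∃ f : ℕ → ℕ,
      ORecursiveIn
        (charFun {n | (∃ x y, n = 2 * Nat.pair x y ∧ R x y) ∨
          (∃ x y, n = 2 * Nat.pair x y + 1 ∧ S x y)}) ↑f ∧
      ∀ x y, R x y ↔ S (f x) (f y) := by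
  set A : Set ℕ := {n | (∃ x y, n = 2 * Nat.pair x y ∧ R x y) ∨
    (∃ x y, n = 2 * Nat.pair x y + 1 ∧ S x y)} with hA
  have hO01 : ∀ n, charFun A n = 0 ∨ charFun A n = 1 := by
    intro n; unfold charFun; split <;> simp
  have hmemR : ∀ x y, (2 * Nat.pair x y) ∈ A ↔ R x y := by
    intro x y
    constructor
    · intro h
      rcases h with ⟨x', y', heq, hr⟩ | ⟨x', y', heq, _⟩
      · have : Nat.pair x y = Nat.pair x' y' := by omega
        obtain ⟨rfl, rfl⟩ := Nat.pair_eq_pair.1 this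
        exact hr
      · omega
    · intro hr
      exact Or.inl ⟨x, y, rfl, hr⟩
  have hmemS : ∀ x y, (2 * Nat.pair x y + 1) ∈ A ↔ S x y := by
    intro x y
    constructor
    · intro h
      rcases h with ⟨x', y', heq, _⟩ | ⟨x', y', heq, hs⟩
      · omega
      · have : Nat.pair x y = Nat.pair x' y' := by omega
        obtain ⟨rfl, rfl⟩ := Nat.pair_eq_pair.1 this
        exact hs
    · intro hs
      exact Or.inr ⟨x, y, rfl, hs⟩
  have hOR : ∀ x y, charFun A (2 * Nat.pair x y) = 1 ↔ R x y := by
    intro x y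
    unfold charFun
    split
    · simpa using (hmemR x y).1 (by assumption)
    · simp only [Nat.zero_ne_one, false_iff]
      intro hr
      exact absurd ((hmemR x y).2 hr) (by assumption)
  have hOS : ∀ x y, charFun A (2 * Nat.pair x y + 1) = 1 ↔ S x y := by
    intro x y
    unfold charFun
    split
    · simpa using (hmemS x y).1 (by assumption)
    · simp only [Nat.zero_ne_one, false_iff]
      intro hs
      exact absurd ((hmemS x y).2 hs) (by assumption)
  exact main_reduction (charFun A) R S hR hS hcard hO01 hOR hOS
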